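/- In the semigroup of convex closed subsets of the plane ℝ² containing the origin with Minkowski addition and polarity: if K = [−u, u] and L = [−v, v] are centered segments, then (K + L*)* = (1 + |⟨u, v⟩|)^{-1} [−v, v]. -/
import Mathlib


open Pointwise
open scoped RealInnerProductSpace

noncomputable section

/-- The polar of a set `A` in Euclidean space. -/
def polarSet {d : ℕ} (A : Set (EuclideanSpace ℝ (Fin d))) : Set (EuclideanSpace ℝ (Fin d)) :=
  {w | ∀ a ∈ A, ⟪w, a⟫ ≤ (1 : ℝ)}

lemma mem_seg_iff {d : ℕ} (v x : EuclideanSpace ℝ (Fin d)) :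
    x ∈ segment ℝ (-v) v ↔ ∃ t : ℝ, |t| ≤ 1 ∧ t • v = x := by
  constructor
  · rintro ⟨a, b, ha, hb, hab, H⟩
    refine ⟨b - a, ?_, ?_⟩
    · rw [abs_le]; constructor <;> linarith
    · rw [← H, sub_smul, smul_neg]; abel
  · rintro ⟨t, ht, rfl⟩
    rw [abs_le] at ht
    refine ⟨(1 - t) / 2, (1 + t) / 2, by linarith, by linarith, by ring, ?_⟩
    rw [smul_neg, ← neg_smul, ← add_smul]
    congr 1
    ring

lemma mem_strip_iff {d : ℕ} (v w : EuclideanSpace ℝ (Fin d)) :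
    w ∈ polarSet (segment ℝ (-v) v) ↔ |⟪w, v⟫| ≤ 1 := by
  constructor
  · intro h
    rw [abs_le]
    constructor
    · have h1 := h ((-1 : ℝ) • v) ((mem_seg_iff v _).2 ⟨-1, by norm_num, rfl⟩)
      rw [real_inner_smul_right] at h1
      linarith
    · have h1 := h ((1 : ℝ) • v) ((mem_seg_iff v _).2 ⟨1, by norm_num, rfl⟩)
      rw [real_inner_smul_right] at h1
      linarith
  · intro h a ha
    obtain ⟨t, ht, rfl⟩ := (mem_seg_iff v a).1 ha
    rw [real_inner_smul_right]
    calc t * ⟪w, v⟫ ≤ |t * ⟪w, v⟫| := le_abs_self _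
      _ = |t| * |⟪w, v⟫| := abs_mul _ _
      _ ≤ 1 * 1 := mul_le_mul ht h (abs_nonneg _) zero_le_one
      _ = 1 := one_mul 1

/-- For centred segments `K = [−u,u]` and `L = [−v,v]` in the plane,
`(K + L*)* = (1 + |⟨u,v⟩|)⁻¹ [−v,v]`. -/
theorem polar_segment_add_strip (u v : EuclideanSpace ℝ (Fin 2)) :
    polarSet (segment ℝ (-u) u + polarSet (segment ℝ (-v) v)) =
      (1 + |⟪u, v⟫|)⁻¹ • segment ℝ (-v) v := by
  set a : ℝ := |⟪u, v⟫| with ha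
  have ha0 : 0 ≤ a := abs_nonneg _
  have hzeroK : (0 : EuclideanSpace ℝ (Fin 2)) ∈ segment ℝ (-u) u :=
    (mem_seg_iff u 0).2 ⟨0, by norm_num, by simp⟩
  ext x
  constructor
  · intro hx
    by_cases hv : v = 0
    · -- then L* = univ so K + L* = univ, hence x = 0
      have hxz : x = 0 := by
        by_contra hx0
        have hn : (0:ℝ) < ‖x‖ ^ 2 := by
          have := norm_pos_iff.2 hx0
          positivity
        have hmem : ((2 / ‖x‖ ^ 2 : ℝ) • x) ∈
            segment ℝ (-u) u + polarSet (segment ℝ (-v) v) := by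
          rw [Set.mem_add]
          refine ⟨0, hzeroK, (2 / ‖x‖ ^ 2 : ℝ) • x, ?_, by simp⟩
          rw [mem_strip_iff, hv]
          simp
        have h1 := hx _ hmem
        rw [real_inner_smul_right, real_inner_self_eq_norm_sq,
          div_mul_cancel₀ _ (ne_of_gt hn)] at h1
        linarith
      refine ⟨0, ?_, by simp [hxz]⟩
      exact (mem_seg_iff v 0).2 ⟨0, by norm_num, by simp⟩
    · -- v ≠ 0 : first show x is a multiple of v
      have hvn : (0:ℝ) < ‖v‖ ^ 2 := by
        have := norm_pos_iff.2 hv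
        positivity
      set c : ℝ := ⟪x, v⟫ / ‖v‖ ^ 2 with hc
      set x' : EuclideanSpace ℝ (Fin 2) := x - c • v with hx'
      have hx'v : ⟪x', v⟫ = 0 := by
        rw [hx', inner_sub_left, real_inner_smul_left, hc,
          real_inner_self_eq_norm_sq, div_mul_cancel₀ _ (ne_of_gt hvn), sub_self]
      have hvx' : ⟪v, x'⟫ = 0 := by rw [real_inner_comm]; exact hx'v
      have hx'0 : x' = 0 := by
        by_contra h0
        have hn' : (0:ℝ) < ‖x'‖ ^ 2 := by
          have := norm_pos_iff.2 h0
          positivity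
        have hxx' : ⟪x, x'⟫ = ‖x'‖ ^ 2 := by
          have hxe : x = x' + c • v := by rw [hx']; abel
          rw [hxe, inner_add_left, real_inner_smul_left, hvx',
            real_inner_self_eq_norm_sq]
          ring
        have hmem : ((2 / ‖x'‖ ^ 2 : ℝ) • x') ∈
            segment ℝ (-u) u + polarSet (segment ℝ (-v) v) := by
          rw [Set.mem_add]
          refine ⟨0, hzeroK, (2 / ‖x'‖ ^ 2 : ℝ) • x', ?_, by simp⟩
          rw [mem_strip_iff, real_inner_smul_left, hx'v]
          simp
        have h1 := hx _ hmem
        rw [real_inner_smul_right, hxx', div_mul_cancel₀ _ (ne_of_gt hn')] at h1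
        linarith
      have hxcv : x = c • v := by
        have h2 := hx'0
        rw [hx', sub_eq_zero] at h2
        exact h2
      -- now derive |c| * a + |c| ≤ 1
      set t : ℝ := if 0 ≤ c * ⟪v, u⟫ then 1 else -1 with hht
      set t' : ℝ := if 0 ≤ c then 1 else -1 with hht'
      have hmem : (t • u + (t' / ‖v‖ ^ 2) • v) ∈
          segment ℝ (-u) u + polarSet (segment ℝ (-v) v) := by
        rw [Set.mem_add]
        refine ⟨t • u, ?_, (t' / ‖v‖ ^ 2) • v, ?_, rfl⟩
        · exact (mem_seg_iff u _).2 ⟨t, by rw [hht]; split <;> norm_num, rfl⟩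
        · rw [mem_strip_iff, real_inner_smul_left, real_inner_self_eq_norm_sq,
            div_mul_cancel₀ _ (ne_of_gt hvn)]
          rw [hht']; split <;> norm_num
      have hkey := hx _ hmem
      rw [hxcv, inner_add_right, real_inner_smul_left, real_inner_smul_left,
        real_inner_smul_right, real_inner_smul_right,
        real_inner_self_eq_norm_sq] at hkey
      have e1 : c * (t * ⟪v, u⟫) = |c * ⟪v, u⟫| := by
        rw [hht]; split
        · rw [abs_of_nonneg (by assumption)]; ring
        · rw [abs_of_neg (lt_of_not_ge (by assumption))]; ring
      have e2 : c * (t' / ‖v‖ ^ 2 * ‖v‖ ^ 2) = |c| := by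
        rw [div_mul_cancel₀ _ (ne_of_gt hvn), hht']; split
        · rw [abs_of_nonneg (by assumption)]; ring
        · rw [abs_of_neg (lt_of_not_ge (by assumption))]; ring
      rw [e1, e2] at hkey
      have hca : |c * ⟪v, u⟫| = |c| * a := by
        rw [abs_mul, ha, real_inner_comm]
      rw [hca] at hkey
      -- x = c • v with |c| * a + |c| ≤ 1
      refine ⟨(c * (1 + a)) • v, ?_, ?_⟩
      · refine (mem_seg_iff v _).2 ⟨c * (1 + a), ?_, rfl⟩
        rw [abs_mul, abs_of_pos (by linarith : (0:ℝ) < 1 + a)]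
        nlinarith [abs_nonneg c]
      · show (1 + a)⁻¹ • ((c * (1 + a)) • v) = x
        rw [smul_smul, hxcv]
        congr 1
        field_simp
  · rintro ⟨y, hy, rfl⟩
    obtain ⟨s, hs, rfl⟩ := (mem_seg_iff v y).1 hy
    intro k hk
    rw [Set.mem_add] at hk
    obtain ⟨p, hp, w, hw, rfl⟩ := hk
    obtain ⟨t, ht, rfl⟩ := (mem_seg_iff u p).1 hp
    rw [mem_strip_iff] at hw
    show ⟪(1 + a)⁻¹ • (s • v), t • u + w⟫ ≤ 1
    rw [inner_add_right, real_inner_smul_left, real_inner_smul_left,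
      real_inner_smul_left, real_inner_smul_left, real_inner_smul_right]
    have h1p : (0:ℝ) < 1 + a := by linarith
    have key : s * (t * ⟪v, u⟫) + s * ⟪v, w⟫ ≤ 1 + a := by
      have b1 : s * (t * ⟪v, u⟫) ≤ a := by
        calc s * (t * ⟪v, u⟫) ≤ |s * (t * ⟪v, u⟫)| := le_abs_self _
          _ = |s| * (|t| * |⟪v, u⟫|) := by rw [abs_mul, abs_mul]
          _ ≤ 1 * (1 * a) := by
              rw [ha, real_inner_comm]
              exact mul_le_mul hs (mul_le_mul ht le_rfl (abs_nonneg _) zero_le_one)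
                (by positivity) zero_le_one
          _ = a := by ring
      have b2 : s * ⟪v, w⟫ ≤ 1 := by
        calc s * ⟪v, w⟫ ≤ |s * ⟪v, w⟫| := le_abs_self _
          _ = |s| * |⟪v, w⟫| := abs_mul _ _
          _ ≤ 1 * 1 := mul_le_mul hs (by rwa [real_inner_comm]) (abs_nonneg _) zero_le_one
          _ = 1 := one_mul 1
      linarith
    calc (1 + a)⁻¹ * (s * (t * ⟪v, u⟫)) + (1 + a)⁻¹ * (s * ⟪v, w⟫)
        = (1 + a)⁻¹ * (s * (t * ⟪v, u⟫) + s * ⟪v, w⟫) := by ring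
      _ ≤ (1 + a)⁻¹ * (1 + a) := mul_le_mul_of_nonneg_left key (by positivity)
      _ = 1 := inv_mul_cancel₀ (ne_of_gt h1p)
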